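/- In the constructed PO-ALLOCATION-ADDITIVE instance arising from a 3CNF formula φ, if φ is unsatisfiable, then the allocation a is Pareto-optimal: no admissible allocation Pareto-dominates a. -/

import Mathlib

/-- A literal over variables `x_1, …, x_w`: a variable together with a polarity
(`true` = positive literal, `false` = negative literal). -/
abbrev Lit (w : ℕ) := Fin w × Bool

/-- The agents of the PO-ALLOCATION-ADDITIVE instance built from a 3CNF formula:
an agent `a_set(l)` for each literal `l`, an agent `a_{c_i}` for each clause, and
the two agents `a_unassigned` and `a_satisfied`. -/
inductive AgentPO (w w' : ℕ) where
  | aset (l : Lit w)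
  | ac (i : Fin w')
  | aun
  | asat
deriving DecidableEq, Fintype

/-- The resources of the PO-ALLOCATION-ADDITIVE instance: a resource `o_{c_i,l}` for
each clause `c_i` and literal `l ∈ c_i`, a resource `o_{x}` for each variable, a
resource `o_{c_i}` for each clause, and the resource `o_satisfied`. -/
inductive ResPO (w w' : ℕ) (φ : Fin w' → Finset (Lit w)) where
  | olit (x : Σ i : Fin w', {l : Lit w // l ∈ φ i})
  | ovar (x : Fin w)
  | ocl (i : Fin w')
  | osat
deriving DecidableEq, Fintype

/-- The utility coefficients of the constructed PO-ALLOCATION-ADDITIVE instance. -/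
noncomputable def coeffPO (w w' : ℕ) (φ : Fin w' → Finset (Lit w)) :
    AgentPO w w' → ResPO w w' φ → ℝ
  | .aset l, .olit ⟨_, l'⟩ => if (l' : Lit w) = l then 1 else 0
  | .aset l, .ovar x =>
      -- `a_set(l)` values `o_{x}` by the number of occurrences of `l` in the formula
      if l.1 = x then ((Finset.univ.filter fun i => l ∈ φ i).card : ℝ) else 0
  | .ac i, .olit ⟨i', _⟩ => if i' = i then 1 else 0
  | .ac i, .ocl i' => if i' = i then 1 else 0
  | .aun, .ovar _ => 1
  | .aun, .osat => (w : ℝ) + 1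
  | .asat, .ocl _ => 1
  | .asat, .osat => (w' : ℝ)
  | _, _ => 0

/-- The allocation `a` of the constructed instance: each `o_{c_i,l}` goes to `a_set(l)`,
each `o_{x}` goes to `a_unassigned`, each `o_{c_i}` goes to `a_{c_i}`, and `o_satisfied`
goes to `a_satisfied`. (An allocation maps each resource to at most one agent, which
makes it automatically admissible.) -/
def allocPO (w w' : ℕ) (φ : Fin w' → Finset (Lit w)) :
    ResPO w w' φ → Option (AgentPO w w')
  | .olit ⟨_, l⟩ => some (.aset l.1)
  | .ovar _ => some .aun
  | .ocl i => some (.ac i)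
  | .osat => some .asat

/-- The additive utility of agent `A` under an allocation: the sum of `A`'s coefficients
over the resources allocated to `A`. -/
noncomputable def utilPO (w w' : ℕ) (φ : Fin w' → Finset (Lit w))
    (al : ResPO w w' φ → Option (AgentPO w w')) (A : AgentPO w w') : ℝ :=
  ∑ o : ResPO w w' φ, if al o = some A then coeffPO w w' φ A o else 0

/-- `a'` Pareto-dominates `a`: no agent's utility decreases, some agent's utility
strictly increases. -/
def DominatesPO (w w' : ℕ) (φ : Fin w' → Finset (Lit w))
    (a' a : ResPO w w' φ → Option (AgentPO w w')) : Prop :=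
  (∀ A, utilPO w w' φ a A ≤ utilPO w w' φ a' A) ∧
  ∃ A, utilPO w w' φ a A < utilPO w w' φ a' A

/-- An allocation is Pareto-optimal if no (admissible) allocation Pareto-dominates it. -/
def ParetoOptPO (w w' : ℕ) (φ : Fin w' → Finset (Lit w))
    (a : ResPO w w' φ → Option (AgentPO w w')) : Prop :=
  ¬ ∃ a' : ResPO w w' φ → Option (AgentPO w w'), DominatesPO w w' φ a' a

/-- Satisfiability of the 3CNF formula `φ`: some truth assignment makes at least one
literal of every clause true. -/
def SatisfiablePO (w w' : ℕ) (φ : Fin w' → Finset (Lit w)) : Prop :=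
  ∃ v : Fin w → Bool, ∀ i : Fin w', ∃ l ∈ φ i, v l.1 = l.2

section Aux

variable {w w' : ℕ} {φ : Fin w' → Finset (Lit w)}

noncomputable def NoccPO (w w' : ℕ) (φ : Fin w' → Finset (Lit w)) (l : Lit w) : ℝ :=
  ((Finset.univ.filter fun i => l ∈ φ i).card : ℝ)

def resEquivPO (w w' : ℕ) (φ : Fin w' → Finset (Lit w)) :
    ResPO w w' φ ≃ ((Σ i : Fin w', {l : Lit w // l ∈ φ i}) ⊕ (Fin w ⊕ (Fin w' ⊕ Unit))) where
  toFun o := match o with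
    | .olit x => .inl x
    | .ovar x => .inr (.inl x)
    | .ocl i => .inr (.inr (.inl i))
    | .osat => .inr (.inr (.inr ()))
  invFun s := match s with
    | .inl x => .olit x
    | .inr (.inl x) => .ovar x
    | .inr (.inr (.inl i)) => .ocl i
    | .inr (.inr (.inr _)) => .osat
  left_inv := by rintro (x|x|i|_) <;> rfl
  right_inv := by rintro (x|x|i|⟨⟩) <;> rfl

lemma sum_resPO (f : ResPO w w' φ → ℝ) :
    ∑ o, f o = (∑ x, f (.olit x)) + (∑ x, f (.ovar x)) + (∑ i, f (.ocl i)) + f .osat := by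
  rw [← Equiv.sum_comp (resEquivPO w w' φ).symm f]
  simp [Fintype.sum_sum_type, resEquivPO]
  ring


-- coefficient reduction lemmas
variable {w w' : ℕ} {φ : Fin w' → Finset (Lit w)}

lemma coeff_aset_olit (l : Lit w) (x : Σ i : Fin w', {l' : Lit w // l' ∈ φ i}) :
    coeffPO w w' φ (.aset l) (.olit x) = if (x.2 : Lit w) = l then 1 else 0 := by
  obtain ⟨i, t⟩ := x; rfl

lemma coeff_ac_olit (i : Fin w') (x : Σ i : Fin w', {l' : Lit w // l' ∈ φ i}) :
    coeffPO w w' φ (.ac i) (.olit x) = if x.1 = i then 1 else 0 := by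
  obtain ⟨j, t⟩ := x; rfl

lemma coeff_aun_olit (x : Σ i : Fin w', {l' : Lit w // l' ∈ φ i}) :
    coeffPO w w' φ .aun (.olit x) = 0 := by
  obtain ⟨j, t⟩ := x; rfl

lemma coeff_asat_olit (x : Σ i : Fin w', {l' : Lit w // l' ∈ φ i}) :
    coeffPO w w' φ .asat (.olit x) = 0 := by
  obtain ⟨j, t⟩ := x; rfl

lemma coeff_aset_ovar (l : Lit w) (x : Fin w) :
    coeffPO w w' φ (.aset l) (.ovar x) = if l.1 = x then NoccPO w w' φ l else 0 := rfl

lemma coeff_aset_ocl (l : Lit w) (i : Fin w') : coeffPO w w' φ (.aset l) (.ocl i) = 0 := rfl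
lemma coeff_aset_osat (l : Lit w) : coeffPO w w' φ (.aset l) (.osat) = 0 := rfl
lemma coeff_ac_ovar (i : Fin w') (x : Fin w) : coeffPO w w' φ (.ac i) (.ovar x) = 0 := rfl
lemma coeff_ac_ocl (i i' : Fin w') :
    coeffPO w w' φ (.ac i) (.ocl i') = if i' = i then 1 else 0 := rfl
lemma coeff_ac_osat (i : Fin w') : coeffPO w w' φ (.ac i) (.osat) = 0 := rfl
lemma coeff_aun_ovar (x : Fin w) : coeffPO w w' φ .aun (.ovar x) = 1 := rfl
lemma coeff_aun_ocl (i : Fin w') : coeffPO w w' φ .aun (.ocl i) = 0 := rfl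
lemma coeff_aun_osat : coeffPO w w' φ .aun (.osat) = (w : ℝ) + 1 := rfl
lemma coeff_asat_ovar (x : Fin w) : coeffPO w w' φ .asat (.ovar x) = 0 := rfl
lemma coeff_asat_ocl (i : Fin w') : coeffPO w w' φ .asat (.ocl i) = 1 := rfl
lemma coeff_asat_osat : coeffPO w w' φ .asat (.osat) = (w' : ℝ) := rfl

lemma alloc_olit (x : Σ i : Fin w', {l' : Lit w // l' ∈ φ i}) :
    allocPO w w' φ (.olit x) = some (.aset (x.2 : Lit w)) := by
  obtain ⟨i, t⟩ := x; rfl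

lemma utilPO_expand (al : ResPO w w' φ → Option (AgentPO w w')) (A : AgentPO w w') :
    utilPO w w' φ al A =
      (∑ x : Σ i : Fin w', {l : Lit w // l ∈ φ i},
          if al (.olit x) = some A then coeffPO w w' φ A (.olit x) else 0)
      + (∑ x : Fin w, if al (.ovar x) = some A then coeffPO w w' φ A (.ovar x) else 0)
      + (∑ i : Fin w', if al (.ocl i) = some A then coeffPO w w' φ A (.ocl i) else 0)
      + (if al .osat = some A then coeffPO w w' φ A .osat else 0) := by
  rw [utilPO]; exact sum_resPO _

-- generic counting helpers
lemma all_of_le_indicatorPO {ι : Type*} [Fintype ι] (p : ι → Prop) [DecidablePred p]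
    (h : (Fintype.card ι : ℝ) ≤ ∑ x : ι, if p x then (1:ℝ) else 0) (x : ι) : p x := by
  rw [Finset.sum_boole] at h
  have hc : Fintype.card ι ≤ (Finset.univ.filter p).card := by exact_mod_cast h
  have heq : (Finset.univ.filter p) = Finset.univ :=
    Finset.eq_of_subset_of_card_le (Finset.filter_subset _ _)
      (by simpa [Finset.card_univ] using hc)
  have hx : x ∈ Finset.univ.filter p := by rw [heq]; exact Finset.mem_univ x
  exact (Finset.mem_filter.1 hx).2

lemma exists_of_indicator_posPO {ι : Type*} [Fintype ι] (p : ι → Prop) [DecidablePred p]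
    (h : (0:ℝ) < ∑ x : ι, if p x then (1:ℝ) else 0) : ∃ x, p x := by
  by_contra hc
  push_neg at hc
  simp [hc] at h

lemma eq_of_sum_le_sumPO {ι : Type*} [Fintype ι] (f g : ι → ℝ) (hfg : ∀ x, g x ≤ f x)
    (h : ∑ x, f x ≤ ∑ x, g x) (x : ι) : f x = g x := by
  have heq : ∑ x : ι, g x = ∑ x : ι, f x :=
    le_antisymm (Finset.sum_le_sum fun y _ => hfg y) h
  exact ((Finset.sum_eq_sum_iff_of_le (fun y _ => hfg y)).1 heq x (Finset.mem_univ x)).symm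

lemma sum_ite_pointPO {ι : Type*} [Fintype ι] [DecidableEq ι] (i : ι) (P : ι → Prop)
    [DecidablePred P] (c : ℝ) :
    (∑ j : ι, if P j then (if j = i then c else 0) else 0) = if P i then c else 0 := by
  have hcongr : ∀ j ∈ Finset.univ, (if P j then (if j = i then c else 0) else 0)
      = (if j = i then (if P j then c else 0) else 0) := by
    intro j _
    by_cases h1 : P j <;> by_cases h2 : j = i <;> simp [h1, h2]
  rw [Finset.sum_congr rfl hcongr, Finset.sum_ite_eq' Finset.univ i]
  simp

lemma sum_ite_pointPO' {ι : Type*} [Fintype ι] [DecidableEq ι] (i : ι) (P : ι → Prop)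
    [DecidablePred P] (c : ℝ) :
    (∑ j : ι, if P j then (if i = j then c else 0) else 0) = if P i then c else 0 := by
  have hcongr : ∀ j ∈ Finset.univ, (if P j then (if i = j then c else 0) else 0)
      = (if j = i then (if P j then c else 0) else 0) := by
    intro j _
    by_cases h1 : P j <;> by_cases h2 : i = j
    · simp [h1, h2]
    · have h2' : ¬ j = i := fun h => h2 h.symm
      simp [h1, h2, h2']
    · simp [h1, h2]
    · have h2' : ¬ j = i := fun h => h2 h.symm
      simp [h1, h2, h2']
  rw [Finset.sum_congr rfl hcongr, Finset.sum_ite_eq' Finset.univ i]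
  simp

lemma sigma_indicatorPO (l : Lit w) :
    (∑ x : Σ i : Fin w', {l' : Lit w // l' ∈ φ i}, if (x.2 : Lit w) = l then (1:ℝ) else 0)
      = NoccPO w w' φ l := by
  rw [← Finset.univ_sigma_univ, Finset.sum_sigma]
  have hin : ∀ i : Fin w', (∑ t : {l' : Lit w // l' ∈ φ i}, if (t : Lit w) = l then (1:ℝ) else 0)
      = if l ∈ φ i then 1 else 0 := by
    intro i
    rw [← Finset.sum_subtype (φ i) (fun x => Iff.rfl) (fun l' => if l' = l then (1:ℝ) else 0)]
    simp [Finset.sum_ite_eq']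
  rw [Finset.sum_congr rfl fun i _ => hin i]
  simp [NoccPO, Finset.sum_boole]

lemma util_base_aun : utilPO w w' φ (allocPO w w' φ) .aun = (w : ℝ) := by
  rw [utilPO_expand]
  simp [alloc_olit, allocPO, coeff_aun_olit, coeff_aun_ovar, coeff_aun_ocl, coeff_aun_osat]

lemma util_base_asat : utilPO w w' φ (allocPO w w' φ) .asat = (w' : ℝ) := by
  rw [utilPO_expand]
  simp [alloc_olit, allocPO, coeff_asat_olit, coeff_asat_ovar, coeff_asat_ocl, coeff_asat_osat]

lemma util_base_ac (i : Fin w') : utilPO w w' φ (allocPO w w' φ) (.ac i) = 1 := by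
  rw [utilPO_expand]
  simp only [alloc_olit, allocPO, coeff_ac_olit, coeff_ac_ovar, coeff_ac_ocl, coeff_ac_osat]
  erw [sum_ite_pointPO i (fun i' => (some (AgentPO.ac i') : Option (AgentPO w w')) = some (.ac i)) 1]
  simp

lemma util_base_aset (l : Lit w) :
    utilPO w w' φ (allocPO w w' φ) (.aset l) = NoccPO w w' φ l := by
  rw [utilPO_expand]
  simp only [alloc_olit, allocPO, coeff_aset_olit, coeff_aset_ovar, coeff_aset_ocl,
    coeff_aset_osat, Option.some.injEq]
  simp only [reduceCtorEq, if_false, ite_self, Finset.sum_const_zero, add_zero,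
    AgentPO.aset.injEq]
  rw [← sigma_indicatorPO l]
  exact Finset.sum_congr rfl fun x _ => by by_cases h : (x.2 : Lit w) = l <;> simp [h]

lemma casePO_sat (w w' : ℕ)
    (φ : Fin w' → Finset (Lit w))
    (a' : ResPO w w' φ → Option (AgentPO w w'))
    (hle : ∀ A, utilPO w w' φ (allocPO w w' φ) A ≤ utilPO w w' φ a' A)
    (hstrict : ∃ A, utilPO w w' φ (allocPO w w' φ) A < utilPO w w' φ a' A)
    (hsat : a' .osat = some .asat) : False := by
  -- every variable resource goes to a_un
  have haun : ∀ x : Fin w, a' (.ovar x) = some .aun := by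
    have h := hle .aun
    rw [util_base_aun, utilPO_expand] at h
    simp only [coeff_aun_olit, coeff_aun_ovar, coeff_aun_ocl, coeff_aun_osat, hsat,
      ite_self, Finset.sum_const_zero, add_zero, zero_add, reduceCtorEq, if_false,
      Option.some.injEq] at h
    exact all_of_le_indicatorPO _ (by simpa [Fintype.card_fin] using h)
  -- every literal resource keeps its owner
  have haset : ∀ x : Σ i : Fin w', {l : Lit w // l ∈ φ i},
      a' (.olit x) = some (.aset (x.2 : Lit w)) := by
    intro x
    have h := hle (.aset (x.2 : Lit w))
    rw [util_base_aset, utilPO_expand] at h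
    simp only [coeff_aset_olit, coeff_aset_ovar, coeff_aset_ocl, coeff_aset_osat, haun, hsat,
      ite_self, Finset.sum_const_zero, add_zero, zero_add, reduceCtorEq, if_false,
      Option.some.injEq] at h
    rw [← sigma_indicatorPO (φ := φ) (x.2 : Lit w)] at h
    have key := eq_of_sum_le_sumPO
      (fun y : Σ i : Fin w', {l : Lit w // l ∈ φ i} =>
        if (y.2 : Lit w) = (x.2 : Lit w) then (1:ℝ) else 0)
      (fun y => if a' (.olit y) = some (.aset (x.2 : Lit w))
        then (if (y.2 : Lit w) = (x.2 : Lit w) then (1:ℝ) else 0) else 0)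
      (fun y => by by_cases hy : a' (.olit y) = some (.aset (x.2 : Lit w)) <;>
        by_cases hy2 : (y.2 : Lit w) = (x.2 : Lit w) <;> simp [hy, hy2]) h x
    by_cases hx : a' (.olit x) = some (.aset (x.2 : Lit w))
    · exact hx
    · simp [hx] at key
  -- every clause resource keeps its owner
  have hocl : ∀ i : Fin w', a' (.ocl i) = some (.ac i) := by
    intro i
    have h := hle (.ac i)
    rw [util_base_ac, utilPO_expand] at h
    simp only [coeff_ac_olit, coeff_ac_ovar, coeff_ac_ocl, coeff_ac_osat, haset, hsat,
      ite_self, Finset.sum_const_zero, add_zero, zero_add, reduceCtorEq, if_false,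
      Option.some.injEq] at h
    rw [sum_ite_pointPO i (fun i' => a' (.ocl i') = some (.ac i)) 1] at h
    by_cases hx : a' (.ocl i) = some (.ac i)
    · exact hx
    · simp [hx] at h; linarith
  -- hence a' = allocPO, contradicting strict improvement
  have heq : a' = allocPO w w' φ := by
    funext o
    cases o with
    | olit x => rw [haset x, alloc_olit]
    | ovar x => exact haun x
    | ocl i => exact hocl i
    | osat => exact hsat
  obtain ⟨A, hA⟩ := hstrict
  rw [heq] at hA
  exact lt_irrefl _ hA

lemma casePO_unsat (w w' : ℕ)
    (φ : Fin w' → Finset (Lit w))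
    (hunsat : ¬ (∃ v : Fin w → Bool, ∀ i : Fin w', ∃ l ∈ φ i, v l.1 = l.2))
    (a' : ResPO w w' φ → Option (AgentPO w w'))
    (hle : ∀ A, utilPO w w' φ (allocPO w w' φ) A ≤ utilPO w w' φ a' A)
    (hsat : ¬ a' .osat = some .asat) : False := by
  -- a_sat must receive every clause resource
  have hocl : ∀ i : Fin w', a' (.ocl i) = some .asat := by
    have h := hle .asat
    rw [util_base_asat, utilPO_expand] at h
    simp only [coeff_asat_olit, coeff_asat_ovar, coeff_asat_ocl, coeff_asat_osat, hsat,
      ite_self, Finset.sum_const_zero, add_zero, zero_add, if_neg hsat] at h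
    exact all_of_le_indicatorPO _ (by simpa [Fintype.card_fin] using h)
  -- each clause agent must receive a literal resource of its clause
  have hcl : ∀ i : Fin w', ∃ x : Σ i : Fin w', {l : Lit w // l ∈ φ i},
      a' (.olit x) = some (.ac i) ∧ x.1 = i := by
    intro i
    have h := hle (.ac i)
    rw [util_base_ac, utilPO_expand] at h
    simp only [coeff_ac_olit, coeff_ac_ovar, coeff_ac_ocl, coeff_ac_osat, hocl,
      ite_self, Finset.sum_const_zero, add_zero, zero_add, reduceCtorEq, if_false,
      Option.some.injEq] at h
    have h' : (0:ℝ) < ∑ x : Σ i : Fin w', {l : Lit w // l ∈ φ i},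
        if a' (.olit x) = some (.ac i) ∧ x.1 = i then (1:ℝ) else 0 := by
      have hcongr : ∀ x ∈ (Finset.univ : Finset (Σ i : Fin w', {l : Lit w // l ∈ φ i})),
          (if a' (.olit x) = some (.ac i) then (if x.1 = i then (1:ℝ) else 0) else 0)
            = (if a' (.olit x) = some (.ac i) ∧ x.1 = i then (1:ℝ) else 0) := by
        intro x _
        by_cases h1 : a' (.olit x) = some (.ac i) <;> by_cases h2 : x.1 = i <;>
          simp [h1, h2]
      rw [← Finset.sum_congr rfl hcongr]
      linarith
    exact exists_of_indicator_posPO _ h'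
  -- the set-agents of those literals must receive the variable resources
  have hvar : ∀ x : Σ i : Fin w', {l : Lit w // l ∈ φ i},
      a' (.olit x) = some (.ac x.1) →
      a' (.ovar (x.2 : Lit w).1) = some (.aset (x.2 : Lit w)) := by
    intro x hx
    set l : Lit w := (x.2 : Lit w) with hl
    have h := hle (.aset l)
    rw [util_base_aset, utilPO_expand] at h
    simp only [coeff_aset_olit, coeff_aset_ovar, coeff_aset_ocl, coeff_aset_osat,
      ite_self, Finset.sum_const_zero, add_zero, zero_add] at h
    rw [sum_ite_pointPO' l.1 (fun y => a' (.ovar y) = some (.aset l)) (NoccPO w w' φ l)] at h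
    -- bound the literal part by Nocc - 1
    set f : (Σ i : Fin w', {l' : Lit w // l' ∈ φ i}) → ℝ :=
      fun y => if (y.2 : Lit w) = l then 1 else 0 with hf
    set g : (Σ i : Fin w', {l' : Lit w // l' ∈ φ i}) → ℝ :=
      fun y => if a' (.olit y) = some (.aset l) then (if (y.2 : Lit w) = l then (1:ℝ) else 0) else 0
      with hg
    have hgle : ∀ y, g y ≤ f y := fun y => by
      by_cases h1 : a' (.olit y) = some (.aset l) <;>
        by_cases h2 : (y.2 : Lit w) = l <;> simp [hf, hg, h1, h2]
    have hgx : g x = 0 := by simp [hg, hx]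
    have hfx : f x = 1 := by simp [hf, hl]
    have hsumf : ∑ y, f y = NoccPO w w' φ l := sigma_indicatorPO l
    have hbound : ∑ y, g y ≤ NoccPO w w' φ l - 1 := by
      have e1 : ∑ y ∈ Finset.univ.erase x, g y + g x = ∑ y, g y :=
        Finset.sum_erase_add _ _ (Finset.mem_univ x)
      have e2 : ∑ y ∈ Finset.univ.erase x, f y + f x = ∑ y, f y :=
        Finset.sum_erase_add _ _ (Finset.mem_univ x)
      have e3 : ∑ y ∈ Finset.univ.erase x, g y ≤ ∑ y ∈ Finset.univ.erase x, f y :=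
        Finset.sum_le_sum fun y _ => hgle y
      rw [hgx, add_zero] at e1
      rw [hfx] at e2
      linarith
    by_cases hov : a' (.ovar l.1) = some (.aset l)
    · exact hov
    · rw [if_neg hov] at h
      have : NoccPO w w' φ l ≤ ∑ y, g y := by linarith
      linarith
  -- build a satisfying assignment: contradiction
  apply hunsat
  refine ⟨fun y => decide (a' (.ovar y) = some (.aset (y, true))), fun i => ?_⟩
  obtain ⟨x, hx, hx1⟩ := hcl i
  have hmem : (x.2 : Lit w) ∈ φ i := hx1 ▸ x.2.2
  refine ⟨(x.2 : Lit w), hmem, ?_⟩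
  have hov := hvar x (by rw [hx1]; exact hx)
  set l : Lit w := (x.2 : Lit w) with hl
  cases hb : l.2 with
  | true =>
    have hpe : (l.1, true) = l := by rw [← hb]
    simp [hpe, hov, hb]
  | false =>
    have hne : ¬ a' (.ovar l.1) = some (.aset (l.1, true)) := by
      rw [hov]
      simp only [Option.some.injEq, AgentPO.aset.injEq]
      intro hcon
      have := congrArg Prod.snd hcon
      simp [hb] at this
    simp [hne, hb]

end Aux

/-- If the 3CNF formula `φ` (each clause has at most 3 literals) is unsatisfiable, then
the allocation `a` of the constructed PO-ALLOCATION-ADDITIVE instance is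
Pareto-optimal: no admissible allocation Pareto-dominates it. -/
theorem allocPO_paretoOptimal_of_unsatisfiable (w w' : ℕ)
    (φ : Fin w' → Finset (Lit w)) (hφ : ∀ i, (φ i).card ≤ 3)
    (hunsat : ¬ SatisfiablePO w w' φ) :
    ParetoOptPO w w' φ (allocPO w w' φ) := by
  rintro ⟨a', hle, hstrict⟩
  by_cases hsat : a' .osat = some .asat
  · exact casePO_sat w w' φ a' hle hstrict hsat
  · exact casePO_unsat w w' φ hunsat a' hle hsat
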